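/- Let d ≥ 1, N ≥ 1, fix i ∈ {1,…,d}, let R(x) = x_i/|x|^{d+1} on ℝ^d∖{0}, and for x ≠ 0 let P_N(x,y) be the Taylor polynomial of degree N−1 in y, centered at y = 0, of y ↦ R(x−y). Let f ∈ L_N(ℝ^d) with constants C > 0, 0 ≤ ε < 1, and let 0 < δ < 1−ε. Then there exists a constant C' > 0 (depending only on d, N and δ) such that for every x ≠ 0, ∫_{{y : |y−x| ≥ |x|/2 and |y| ≥ |x|/2}} |f(y)|·|R(x−y) − P_N(x,y)| dy ≤ C'·|x|^{−d−N+ε+δ}·∫_{ℝ^d} |y|^{N−ε−δ}|f(y)| dy, where the last integral is finite. -/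

import Mathlib

open MeasureTheory Filter Topology Real

noncomputable section

abbrev Ed (d : ℕ) := EuclideanSpace ℝ (Fin d)

/-- The class `L_N(ℝ^d)` with constants `C` and `ε`. -/
structure IsLN (d N : ℕ) (f : Ed d → ℝ) (C ε : ℝ) : Prop where
  smooth : ContDiff ℝ 1 f
  Cpos : 0 < C
  eps_nonneg : 0 ≤ ε
  eps_lt_one : ε < 1
  decay : ∀ x : Ed d, |f x| ≤ C * (1 + ‖x‖) ^ (-(d:ℝ) - N + ε)
  deriv_decay : ∀ (x : Ed d) (j : Fin d),
      |fderiv ℝ f x (EuclideanSpace.single j 1)| ≤ C * (1 + ‖x‖) ^ (-(d:ℝ) - N - 1 + ε)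
  moments : ∀ β : Fin d → ℕ, (∑ j, β j) < N →
      ∫ x : Ed d, (∏ j, (x j) ^ (β j)) * f x = 0

/-- The Riesz kernel `R(x) = x_i / ‖x‖^(d+1)`. -/
noncomputable def rieszKernel (d : ℕ) (i : Fin d) (x : Ed d) : ℝ := x i / ‖x‖ ^ (d + 1)

/-- `P_N(x,y)`: the Taylor polynomial of degree `N-1` in `y`, centered at `y = 0`, of the
function `y ↦ R(x - y)`. -/
noncomputable def taylorP (d N : ℕ) (i : Fin d) (x y : Ed d) : ℝ :=
  ∑ k ∈ Finset.range N,
    ((k.factorial : ℝ))⁻¹ * iteratedFDeriv ℝ k (fun z => rieszKernel d i (x - z)) 0 (fun _ => y)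

section Aux

variable {E F : Type*} [NormedAddCommGroup E] [NormedSpace ℝ E]
  [NormedAddCommGroup F] [NormedSpace ℝ F]

lemma fderiv_comp_add_const' (f : E → F) (a x : E) :
    fderiv ℝ (fun z => f (z + a)) x = fderiv ℝ f (x + a) := by
  by_cases h : DifferentiableAt ℝ f (x + a)
  · have h2 : HasFDerivAt (fun z : E => z + a) (ContinuousLinearMap.id ℝ E) x :=
      (hasFDerivAt_id x).add_const a
    have h1 := h.hasFDerivAt.comp x h2
    exact (by simpa [Function.comp] using h1.fderiv :
      fderiv ℝ (f ∘ fun z => z + a) x = fderiv ℝ f (x + a))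
  · have h2 : ¬ DifferentiableAt ℝ (fun z => f (z + a)) x := by
      intro hcontra
      apply h
      have heq : f = (fun z => f (z + a)) ∘ (fun w : E => w - a) := by
        funext w; simp [Function.comp]
      rw [heq]
      have hcontra' : DifferentiableAt ℝ (fun z => f (z + a)) (x + a - a) := by
        rwa [add_sub_cancel_right]
      exact hcontra'.comp (x + a) (differentiableAt_id.sub_const a)
    rw [fderiv_zero_of_not_differentiableAt h, fderiv_zero_of_not_differentiableAt h2]

lemma iteratedFDeriv_comp_add_const' (k : ℕ) (f : E → F) (a : E) (x : E) :
    iteratedFDeriv ℝ k (fun z => f (z + a)) x = iteratedFDeriv ℝ k f (x + a) := by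
  induction k generalizing x with
  | zero => ext m; simp
  | succ k IH =>
    ext m
    rw [iteratedFDeriv_succ_apply_left, iteratedFDeriv_succ_apply_left]
    have e1 : iteratedFDeriv ℝ k (fun z => f (z + a)) =
        fun z => iteratedFDeriv ℝ k f (z + a) := funext fun z => IH z
    rw [e1, fderiv_comp_add_const' (iteratedFDeriv ℝ k f) a x]

lemma myFDerivConstSmul (c : ℝ) (hc : c ≠ 0) (f : E → F) (x : E) :
    fderiv ℝ (fun z => c • f z) x = c • fderiv ℝ f x := by
  by_cases h : DifferentiableAt ℝ f x
  · exact (h.hasFDerivAt.const_smul c).fderiv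
  · have h2 : ¬ DifferentiableAt ℝ (fun z => c • f z) x := by
      intro hcontra
      apply h
      have heq : f = fun z => c⁻¹ • (c • f z) := by
        funext z; rw [inv_smul_smul₀ hc]
      rw [heq]
      exact hcontra.const_smul c⁻¹
    rw [fderiv_zero_of_not_differentiableAt h, fderiv_zero_of_not_differentiableAt h2,
      smul_zero]

lemma iteratedFDeriv_const_smul' (c : ℝ) (hc : c ≠ 0) (k : ℕ) (f : E → F) (x : E) :
    iteratedFDeriv ℝ k (fun z => c • f z) x = c • iteratedFDeriv ℝ k f x := by
  induction k generalizing x with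
  | zero => ext m; simp
  | succ k IH =>
    ext m
    simp only [ContinuousMultilinearMap.smul_apply]
    rw [iteratedFDeriv_succ_apply_left, iteratedFDeriv_succ_apply_left]
    have e1 : iteratedFDeriv ℝ k (fun z => c • f z) =
        fun z => c • iteratedFDeriv ℝ k f z := funext fun z => IH z
    rw [e1, myFDerivConstSmul c hc (iteratedFDeriv ℝ k f) x]
    simp

lemma iteratedFDeriv_comp_CLE (k : ℕ) (f : E → F) (e : E ≃L[ℝ] E) (x : E) :
    iteratedFDeriv ℝ k (fun z => f (e z)) x =
      (iteratedFDeriv ℝ k f (e x)).compContinuousLinearMap (fun _ => e) := by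
  have h := e.iteratedFDerivWithin_comp_right f uniqueDiffOn_univ
    (Set.mem_univ (e x)) k (x := x)
  simp only [Set.preimage_univ, iteratedFDerivWithin_univ] at h
  exact h

lemma core_ineq {c yn t a s2 : ℝ} (hc : 0 < c) (hyn0 : 0 < yn) (hyn : c ≤ 2 * yn)
    (hta : t ≤ a) :
    c ^ (s2 - t) * yn ^ t ≤ 2 ^ (a - t) * (c ^ (s2 - a) * yn ^ a) := by
  have h1 : c ^ (s2 - t) = c ^ (s2 - a) * c ^ (a - t) := by
    rw [← Real.rpow_add hc]; congr 1; ring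
  have h2 : c ^ (a - t) ≤ (2 * yn) ^ (a - t) :=
    Real.rpow_le_rpow hc.le hyn (by linarith)
  have h3 : (2 * yn) ^ (a - t) = 2 ^ (a - t) * yn ^ (a - t) :=
    Real.mul_rpow (by norm_num) hyn0.le
  have h4 : yn ^ (a - t) * yn ^ t = yn ^ a := by
    rw [← Real.rpow_add hyn0]; congr 1; ring
  calc c ^ (s2 - t) * yn ^ t = c ^ (s2 - a) * (c ^ (a - t) * yn ^ t) := by rw [h1]; ring
    _ ≤ c ^ (s2 - a) * ((2 * yn) ^ (a - t) * yn ^ t) := by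
        apply mul_le_mul_of_nonneg_left
          (mul_le_mul_of_nonneg_right h2 (Real.rpow_nonneg hyn0.le t))
          (Real.rpow_nonneg hc.le _)
    _ = 2 ^ (a - t) * (c ^ (s2 - a) * yn ^ a) := by rw [h3, ← h4]; ring

end Aux

section Riesz

variable {d : ℕ} {i : Fin d}

lemma abs_coord_le_norm (w : Ed d) (i : Fin d) : |w i| ≤ ‖w‖ := by
  have h := abs_real_inner_le_norm (EuclideanSpace.single i (1:ℝ)) w
  rw [EuclideanSpace.inner_single_left] at h
  simpa [EuclideanSpace.norm_single] using h

lemma riesz_neg (z : Ed d) : rieszKernel d i (-z) = - rieszKernel d i z := by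
  have h : (-z) i = -(z i) := rfl
  simp [rieszKernel, h, neg_div]

lemma riesz_smul (c : ℝ) (hc : 0 < c) (z : Ed d) :
    rieszKernel d i (c • z) = (c ^ d)⁻¹ * rieszKernel d i z := by
  have h1 : (c • z) i = c * z i := rfl
  rcases eq_or_ne z 0 with rfl | hz
  · simp [rieszKernel]
  · have hz' : ‖z‖ ≠ 0 := norm_ne_zero_iff.2 hz
    rw [rieszKernel, rieszKernel, h1, norm_smul, Real.norm_eq_abs, abs_of_pos hc, mul_pow]
    field_simp
    ring

lemma contDiffAt_riesz {n : ℕ} {x : Ed d} (hx : x ≠ 0) :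
    ContDiffAt ℝ n (rieszKernel d i) x := by
  have h1 : ContDiffAt ℝ n (fun x : Ed d => x i) x :=
    ((EuclideanSpace.proj (𝕜 := ℝ) i).contDiff (n := n)).contDiffAt
  have h2 : ContDiffAt ℝ n (fun x : Ed d => ‖x‖ ^ (d+1)) x :=
    (contDiffAt_norm ℝ hx).pow _
  exact h1.div h2 (pow_ne_zero _ (norm_ne_zero_iff.2 hx))

lemma riesz_deriv_bound (d : ℕ) (i : Fin d) :
    ∃ M : ℕ → ℝ, (∀ k, 0 ≤ M k) ∧ ∀ (k : ℕ) (x y : Ed d), x ≠ 0 →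
      |iteratedFDeriv ℝ k (fun z => rieszKernel d i (x - z)) 0 (fun _ => y)| ≤
        M k * ‖x‖ ^ (-(d:ℝ) - k) * ‖y‖ ^ k := by
  have hM : ∀ k : ℕ, ∃ Mk : ℝ, 0 ≤ Mk ∧ ∀ v : Ed d, ‖v‖ = 1 →
      ‖iteratedFDeriv ℝ k (rieszKernel d i) v‖ ≤ Mk := by
    intro k
    have hU : UniqueDiffOn ℝ ({0}ᶜ : Set (Ed d)) := isOpen_compl_singleton.uniqueDiffOn
    have hR : ContDiffOn ℝ k (rieszKernel d i) ({0}ᶜ : Set (Ed d)) := fun x hx =>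
      (contDiffAt_riesz (by simpa using hx)).contDiffWithinAt
    have hcont : ContinuousOn (iteratedFDeriv ℝ k (rieszKernel d i))
        ({0}ᶜ : Set (Ed d)) := by
      have h1 := hR.continuousOn_iteratedFDerivWithin (m := k) le_rfl hU
      exact h1.congr ((iteratedFDerivWithin_of_isOpen k isOpen_compl_singleton).symm)
    have hsub : Metric.sphere (0 : Ed d) 1 ⊆ ({0}ᶜ : Set (Ed d)) := by
      intro v hv
      rw [mem_sphere_zero_iff_norm] at hv
      simp only [Set.mem_compl_iff, Set.mem_singleton_iff]
      intro h0
      rw [h0] at hv; simp at hv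
    obtain ⟨Mk, hMk⟩ := (isCompact_sphere (0 : Ed d) 1).exists_bound_of_continuousOn
      (hcont.mono hsub)
    exact ⟨max Mk 0, le_max_right _ _, fun v hv =>
      le_max_of_le_left (hMk v (by rwa [mem_sphere_zero_iff_norm]))⟩
  choose M hM0 hMb using hM
  refine ⟨M, hM0, ?_⟩
  intro k x y hx
  have hc : 0 < ‖x‖ := norm_pos_iff.2 hx
  set c : ℝ := ‖x‖ with hcdef
  have hA : iteratedFDeriv ℝ k (fun z => rieszKernel d i (x - z)) 0 =
      (-1 : ℝ) • iteratedFDeriv ℝ k (rieszKernel d i) (-x) := by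
    have e1 : (fun z : Ed d => rieszKernel d i (x - z)) =
        fun z => (-1 : ℝ) • rieszKernel d i (z + (-x)) := by
      funext z
      have h2 : x - z = -(z + (-x)) := by abel
      rw [h2, riesz_neg]
      simp
    rw [e1, iteratedFDeriv_const_smul' (-1) (by norm_num) k _ 0,
      iteratedFDeriv_comp_add_const' k (rieszKernel d i) (-x) 0, zero_add]
  set u : Ed d := c⁻¹ • (-x) with hu
  have hu1 : ‖u‖ = 1 := by
    rw [hu, norm_smul, norm_neg, norm_inv, Real.norm_eq_abs, abs_of_pos hc]
    field_simp
    exact hcdef.symm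
  set e : Ed d ≃L[ℝ] Ed d :=
    (LinearEquiv.smulOfNeZero ℝ (Ed d) c hc.ne').toContinuousLinearEquiv with he
  have hee : ∀ z : Ed d, e z = c • z := fun z => rfl
  have heq : (fun z : Ed d => rieszKernel d i (e z)) =
      fun z => ((c ^ d)⁻¹ : ℝ) • rieszKernel d i z := by
    funext z
    rw [hee, riesz_smul c hc, smul_eq_mul]
  have h1 := iteratedFDeriv_comp_CLE k (rieszKernel d i) e u
  rw [heq, iteratedFDeriv_const_smul' ((c^d)⁻¹ : ℝ) (by positivity) k _ u] at h1
  have heu : e u = -x := by rw [hee, hu, smul_inv_smul₀ hc.ne']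
  rw [heu] at h1
  have h2 := congrArg (fun T : ContinuousMultilinearMap ℝ (fun _ : Fin k => Ed d) ℝ =>
    T (fun _ : Fin k => c⁻¹ • y)) h1
  simp only [ContinuousMultilinearMap.smul_apply,
    ContinuousMultilinearMap.compContinuousLinearMap_apply] at h2
  have h2' : ((c ^ d)⁻¹ * (iteratedFDeriv ℝ k (rieszKernel d i) u) fun _ : Fin k => c⁻¹ • y) =
      (iteratedFDeriv ℝ k (rieszKernel d i) (-x)) fun _ : Fin k => y := by
    rw [← smul_eq_mul, h2]
    congr 1
    funext j
    rw [ContinuousLinearEquiv.coe_coe, hee, smul_inv_smul₀ hc.ne']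
  have hTu : |iteratedFDeriv ℝ k (rieszKernel d i) u (fun _ : Fin k => c⁻¹ • y)| ≤
      M k * (c⁻¹ * ‖y‖) ^ k := by
    calc |iteratedFDeriv ℝ k (rieszKernel d i) u (fun _ : Fin k => c⁻¹ • y)|
        ≤ ‖iteratedFDeriv ℝ k (rieszKernel d i) u‖ * ∏ _j : Fin k, ‖c⁻¹ • y‖ :=
          (iteratedFDeriv ℝ k (rieszKernel d i) u).le_opNorm _
      _ ≤ M k * (c⁻¹ * ‖y‖) ^ k := by
          rw [Finset.prod_const, Finset.card_univ, Fintype.card_fin, norm_smul,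
            norm_inv, Real.norm_eq_abs, abs_of_pos hc]
          exact mul_le_mul_of_nonneg_right (hMb k u hu1) (by positivity)
  have hfinal : |iteratedFDeriv ℝ k (fun z => rieszKernel d i (x - z)) 0 (fun _ : Fin k => y)| =
      (c ^ d)⁻¹ * |iteratedFDeriv ℝ k (rieszKernel d i) u (fun _ : Fin k => c⁻¹ • y)| := by
    rw [hA]
    simp only [ContinuousMultilinearMap.smul_apply, smul_eq_mul]
    rw [← h2', abs_mul, abs_mul]
    rw [abs_of_pos (show (0:ℝ) < (c^d)⁻¹ by positivity)]
    simp
  rw [hfinal]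
  have hpow : (c:ℝ) ^ (-(d:ℝ) - k) = ((c ^ (d + k) : ℝ))⁻¹ := by
    rw [← Real.rpow_natCast c (d + k), ← Real.rpow_neg hc.le]
    congr 1
    push_cast
    ring
  calc (c ^ d)⁻¹ * |iteratedFDeriv ℝ k (rieszKernel d i) u (fun _ : Fin k => c⁻¹ • y)|
      ≤ (c ^ d)⁻¹ * (M k * (c⁻¹ * ‖y‖) ^ k) :=
        mul_le_mul_of_nonneg_left hTu (by positivity)
    _ = M k * c ^ (-(d:ℝ) - k) * ‖y‖ ^ k := by
        rw [hpow, mul_pow, pow_add]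
        field_simp
        rw [one_div, inv_pow]
        field_simp

end Riesz

/-- Bound on the region `D₂ = {‖y-x‖ ≥ ‖x‖/2 and ‖y‖ ≥ ‖x‖/2}`: for `f ∈ L_N(ℝ^d)` and
`0 < δ < 1 - ε`,
`∫_{D₂} |f(y)| |R(x-y) - P_N(x,y)| dy ≤ C' ‖x‖^{-d-N+ε+δ} ∫ ‖y‖^{N-ε-δ} |f(y)| dy`,
where `C'` depends only on `d`, `N` and `δ`, and the weighted integral is finite. -/
theorem riesz_region_D2_bound (d N : ℕ) (hd : 1 ≤ d) (hN : 1 ≤ N) (i : Fin d)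
    (δ : ℝ) (hδ : 0 < δ) :
    ∃ C' : ℝ, 0 < C' ∧ ∀ (f : Ed d → ℝ) (C ε : ℝ), IsLN d N f C ε → δ < 1 - ε →
      Integrable (fun y : Ed d => ‖y‖ ^ ((N : ℝ) - ε - δ) * |f y|) ∧
      ∀ x : Ed d, x ≠ 0 →
        IntegrableOn (fun y : Ed d => |f y| * |rieszKernel d i (x - y) - taylorP d N i x y|)
          {y : Ed d | ‖x‖ / 2 ≤ ‖y - x‖ ∧ ‖x‖ / 2 ≤ ‖y‖} ∧
        ∫ y in {y : Ed d | ‖x‖ / 2 ≤ ‖y - x‖ ∧ ‖x‖ / 2 ≤ ‖y‖},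
            |f y| * |rieszKernel d i (x - y) - taylorP d N i x y| ≤
          C' * ‖x‖ ^ (-(d:ℝ) - N + ε + δ) *
            ∫ y : Ed d, ‖y‖ ^ ((N : ℝ) - ε - δ) * |f y| := by
  obtain ⟨M, hM0, hMb⟩ := riesz_deriv_bound d i
  set C' : ℝ := 2 ^ (d + N) + 2 ^ N * ∑ k ∈ Finset.range N, M k / (k.factorial : ℝ) with hC'
  have hsum0 : (0:ℝ) ≤ ∑ k ∈ Finset.range N, M k / (k.factorial : ℝ) :=
    Finset.sum_nonneg fun k _ => div_nonneg (hM0 k) (by positivity)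
  have hC'pos : 0 < C' := by positivity
  refine ⟨C', hC'pos, ?_⟩
  intro f C ε hf hδε
  have hε0 := hf.eps_nonneg
  set a : ℝ := (N:ℝ) - ε - δ with ha
  have hN1 : (1:ℝ) ≤ (N:ℝ) := by exact_mod_cast hN
  have haN : a ≤ (N:ℝ) := by rw [ha]; linarith
  have ha0 : 0 < a := by rw [ha]; linarith
  have hfc : Continuous f := hf.smooth.continuous
  have hwcont : Continuous (fun y : Ed d => ‖y‖ ^ a * |f y|) :=
    (continuous_norm.rpow_const (fun y => Or.inr ha0.le)).mul hfc.abs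
  have hDd : (Module.finrank ℝ (Ed d) : ℝ) < (d:ℝ) + δ := by
    rw [finrank_euclideanSpace_fin]; linarith
  have hgint : Integrable (fun y : Ed d => C * (1 + ‖y‖) ^ (-((d:ℝ) + δ))) :=
    (integrable_one_add_norm hDd).const_mul C
  have hw : Integrable (fun y : Ed d => ‖y‖ ^ a * |f y|) := by
    refine hgint.mono' hwcont.aestronglyMeasurable (ae_of_all _ fun y => ?_)
    have h1 : (0:ℝ) < 1 + ‖y‖ := by positivity
    rw [Real.norm_eq_abs, abs_of_nonneg (by positivity)]
    calc ‖y‖ ^ a * |f y| ≤ (1 + ‖y‖) ^ a * (C * (1 + ‖y‖) ^ (-(d:ℝ) - N + ε)) := by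
          apply mul_le_mul (Real.rpow_le_rpow (norm_nonneg y) (by linarith) ha0.le)
            (hf.decay y) (abs_nonneg _) (by positivity)
      _ = C * (1 + ‖y‖) ^ (-((d:ℝ) + δ)) := by
          rw [mul_comm ((1 + ‖y‖) ^ a), mul_assoc, ← Real.rpow_add h1]
          congr 2
          rw [ha]; ring
  refine ⟨hw, ?_⟩
  intro x hx
  have hc : 0 < ‖x‖ := norm_pos_iff.2 hx
  set D₂ : Set (Ed d) := {y : Ed d | ‖x‖ / 2 ≤ ‖y - x‖ ∧ ‖x‖ / 2 ≤ ‖y‖} with hD2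
  have hD₂meas : MeasurableSet D₂ := by
    have heq : D₂ = {y : Ed d | ‖x‖ / 2 ≤ ‖y - x‖} ∩ {y : Ed d | ‖x‖ / 2 ≤ ‖y‖} := rfl
    rw [heq]
    exact ((isClosed_le continuous_const
      (continuous_id.sub continuous_const).norm).measurableSet).inter
      ((isClosed_le continuous_const continuous_norm).measurableSet)
  set K : ℝ := C' * ‖x‖ ^ (-(d:ℝ) - N + ε + δ) with hK
  have hKpos : 0 < K := mul_pos hC'pos (Real.rpow_pos_of_pos hc _)
  have hpt : ∀ y ∈ D₂, |f y| * |rieszKernel d i (x - y) - taylorP d N i x y| ≤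
      K * (‖y‖ ^ a * |f y|) := by
    intro y hy
    obtain ⟨hy1, hy2⟩ := hy
    have hyn0 : 0 < ‖y‖ := lt_of_lt_of_le (by positivity) hy2
    have hyn : ‖x‖ ≤ 2 * ‖y‖ := by linarith
    have hxy0 : 0 < ‖x - y‖ := by rw [norm_sub_rev]; linarith
    have hexp : -(d:ℝ) - N + ε + δ = (-(d:ℝ)) - a := by rw [ha]; ring
    have hWpos : 0 < ‖x‖ ^ ((-(d:ℝ)) - a) * ‖y‖ ^ a :=
      mul_pos (Real.rpow_pos_of_pos hc _) (Real.rpow_pos_of_pos hyn0 _)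
    -- kernel term
    have hR1 : |rieszKernel d i (x - y)| ≤ (‖x - y‖ ^ d)⁻¹ := by
      simp only [rieszKernel]
      rw [abs_div, abs_of_nonneg (by positivity : (0:ℝ) ≤ ‖x - y‖ ^ (d+1))]
      have h2 : |(x - y) i| / ‖x - y‖ ^ (d+1) ≤ ‖x - y‖ / ‖x - y‖ ^ (d+1) := by
        gcongr
        exact abs_coord_le_norm _ _
      refine h2.trans (le_of_eq ?_)
      rw [pow_succ]
      field_simp
    have hR2 : (‖x - y‖ ^ d)⁻¹ ≤ ((‖x‖ / 2) ^ d)⁻¹ := by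
      have hp : (‖x‖ / 2) ^ d ≤ ‖x - y‖ ^ d :=
        pow_le_pow_left₀ (by positivity) (by rw [norm_sub_rev]; exact hy1) d
      exact inv_anti₀ (by positivity) hp
    have hR3 : ((‖x‖ / 2) ^ d)⁻¹ = 2 ^ (d:ℝ) * ‖x‖ ^ (-(d:ℝ)) := by
      rw [← Real.rpow_natCast (‖x‖ / 2) d, Real.div_rpow hc.le (by norm_num : (0:ℝ) ≤ 2),
        Real.rpow_neg hc.le, inv_div, div_eq_mul_inv]
    have hcore0 : ‖x‖ ^ (-(d:ℝ)) ≤ 2 ^ a * (‖x‖ ^ ((-(d:ℝ)) - a) * ‖y‖ ^ a) := by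
      have h := core_ineq (t := 0) (a := a) (s2 := -(d:ℝ)) hc hyn0 hyn ha0.le
      simpa using h
    have hR : |rieszKernel d i (x - y)| ≤
        2 ^ (d + N) * (‖x‖ ^ ((-(d:ℝ)) - a) * ‖y‖ ^ a) := by
      have h4 : |rieszKernel d i (x - y)| ≤
          2 ^ (d:ℝ) * (2 ^ a * (‖x‖ ^ ((-(d:ℝ)) - a) * ‖y‖ ^ a)) := by
        calc |rieszKernel d i (x - y)| ≤ (‖x - y‖ ^ d)⁻¹ := hR1
          _ ≤ ((‖x‖ / 2) ^ d)⁻¹ := hR2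
          _ = 2 ^ (d:ℝ) * ‖x‖ ^ (-(d:ℝ)) := hR3
          _ ≤ 2 ^ (d:ℝ) * (2 ^ a * (‖x‖ ^ ((-(d:ℝ)) - a) * ‖y‖ ^ a)) := by
              apply mul_le_mul_of_nonneg_left hcore0 (by positivity)
      refine h4.trans ?_
      rw [← mul_assoc, ← Real.rpow_add (by norm_num : (0:ℝ) < 2)]
      apply mul_le_mul_of_nonneg_right _ hWpos.le
      calc (2:ℝ) ^ ((d:ℝ) + a) ≤ (2:ℝ) ^ (((d + N : ℕ)):ℝ) := by
            apply Real.rpow_le_rpow_of_exponent_le one_le_two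
            push_cast; linarith
        _ = (2:ℝ) ^ (d + N) := Real.rpow_natCast 2 (d + N)
    -- Taylor terms
    have hT : ∀ k ∈ Finset.range N,
        |((k.factorial : ℝ))⁻¹ *
          iteratedFDeriv ℝ k (fun z => rieszKernel d i (x - z)) 0 (fun _ => y)| ≤
        M k / (k.factorial : ℝ) * 2 ^ N * (‖x‖ ^ ((-(d:ℝ)) - a) * ‖y‖ ^ a) := by
      intro k hk
      rw [Finset.mem_range] at hk
      have hka : (k:ℝ) ≤ a := by
        rw [ha]
        have : (k:ℝ) ≤ (N:ℝ) - 1 := by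
          have : (k + 1 : ℝ) ≤ (N:ℝ) := by exact_mod_cast hk
          linarith
        linarith
      have h1 := hMb k x y hx
      have hcore := core_ineq (t := (k:ℝ)) (a := a) (s2 := -(d:ℝ)) hc hyn0 hyn hka
      have h2k : (2:ℝ) ^ (a - (k:ℝ)) ≤ (2:ℝ) ^ (N:ℝ) :=
        Real.rpow_le_rpow_of_exponent_le one_le_two
          (by have : (0:ℝ) ≤ (k:ℝ) := Nat.cast_nonneg k; linarith)
      have h2N : ((2:ℝ) ^ ((N:ℕ):ℝ)) = (2:ℝ) ^ N := Real.rpow_natCast 2 N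
      have h1' : |iteratedFDeriv ℝ k (fun z => rieszKernel d i (x - z)) 0 (fun _ => y)| ≤
          M k * (2 ^ N * (‖x‖ ^ ((-(d:ℝ)) - a) * ‖y‖ ^ a)) := by
        refine h1.trans ?_
        rw [mul_assoc]
        apply mul_le_mul_of_nonneg_left _ (hM0 k)
        rw [← Real.rpow_natCast ‖y‖ k]
        refine hcore.trans ?_
        apply mul_le_mul_of_nonneg_right _ hWpos.le
        rw [← h2N]
        exact h2k
      rw [abs_mul, abs_inv, Nat.abs_cast]
      calc ((k.factorial : ℝ))⁻¹ *
            |iteratedFDeriv ℝ k (fun z => rieszKernel d i (x - z)) 0 (fun _ => y)|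
          ≤ ((k.factorial : ℝ))⁻¹ *
            (M k * (2 ^ N * (‖x‖ ^ ((-(d:ℝ)) - a) * ‖y‖ ^ a))) :=
            mul_le_mul_of_nonneg_left h1' (by positivity)
        _ = M k / (k.factorial : ℝ) * 2 ^ N * (‖x‖ ^ ((-(d:ℝ)) - a) * ‖y‖ ^ a) := by
            ring
    have htri : |rieszKernel d i (x - y) - taylorP d N i x y| ≤
        |rieszKernel d i (x - y)| + |taylorP d N i x y| := by
      simpa [Real.norm_eq_abs] using
        norm_sub_le (rieszKernel d i (x - y)) (taylorP d N i x y)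
    have hsumT : |taylorP d N i x y| ≤
        (∑ k ∈ Finset.range N, M k / (k.factorial : ℝ)) * 2 ^ N *
          (‖x‖ ^ ((-(d:ℝ)) - a) * ‖y‖ ^ a) := by
      have h5 : |taylorP d N i x y| ≤
          ∑ k ∈ Finset.range N, M k / (k.factorial : ℝ) * 2 ^ N *
            (‖x‖ ^ ((-(d:ℝ)) - a) * ‖y‖ ^ a) := by
        simp only [taylorP]
        exact (Finset.abs_sum_le_sum_abs _ _).trans (Finset.sum_le_sum hT)
      refine h5.trans (le_of_eq ?_)
      rw [← Finset.sum_mul, ← Finset.sum_mul]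
    have habs : |rieszKernel d i (x - y) - taylorP d N i x y| ≤
        C' * (‖x‖ ^ ((-(d:ℝ)) - a) * ‖y‖ ^ a) := by
      have : C' * (‖x‖ ^ ((-(d:ℝ)) - a) * ‖y‖ ^ a) =
          2 ^ (d + N) * (‖x‖ ^ ((-(d:ℝ)) - a) * ‖y‖ ^ a) +
          (∑ k ∈ Finset.range N, M k / (k.factorial : ℝ)) * 2 ^ N *
            (‖x‖ ^ ((-(d:ℝ)) - a) * ‖y‖ ^ a) := by
        rw [hC']; ring
      rw [this]
      linarith
    calc |f y| * |rieszKernel d i (x - y) - taylorP d N i x y|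
        ≤ |f y| * (C' * (‖x‖ ^ ((-(d:ℝ)) - a) * ‖y‖ ^ a)) :=
          mul_le_mul_of_nonneg_left habs (abs_nonneg _)
      _ = K * (‖y‖ ^ a * |f y|) := by
          rw [hK, hexp]; ring
  have hFmeas : AEStronglyMeasurable
      (fun y : Ed d => |f y| * |rieszKernel d i (x - y) - taylorP d N i x y|)
      (volume.restrict D₂) := by
    apply Measurable.aestronglyMeasurable
    apply (hfc.abs.measurable).mul
    apply Measurable.abs
    apply Measurable.sub
    · have hnum : Continuous fun y : Ed d => (x - y) i :=
        (EuclideanSpace.proj (𝕜 := ℝ) i).continuous.comp (continuous_const.sub continuous_id)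
      have hden : Continuous fun y : Ed d => ‖x - y‖ ^ (d + 1) :=
        ((continuous_const.sub continuous_id).norm).pow _
      exact hnum.measurable.div hden.measurable
    · have hP : Continuous fun y : Ed d => taylorP d N i x y := by
        simp only [taylorP]
        apply continuous_finset_sum
        intro k _
        exact continuous_const.mul
          ((iteratedFDeriv ℝ k (fun z => rieszKernel d i (x - z)) 0).cont.comp
            (continuous_pi fun _ => continuous_id))
      exact hP.measurable
  have hwK : Integrable (fun y : Ed d => K * (‖y‖ ^ a * |f y|)) := hw.const_mul K
  have hint : IntegrableOn
      (fun y : Ed d => |f y| * |rieszKernel d i (x - y) - taylorP d N i x y|) D₂ := by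
    refine Integrable.mono' hwK.restrict hFmeas ?_
    refine (ae_restrict_mem hD₂meas).mono fun y hy => ?_
    rw [Real.norm_eq_abs, abs_of_nonneg (mul_nonneg (abs_nonneg _) (abs_nonneg _))]
    exact hpt y hy
  refine ⟨hint, ?_⟩
  have hstep1 : ∫ y in D₂, |f y| * |rieszKernel d i (x - y) - taylorP d N i x y| ≤
      ∫ y in D₂, K * (‖y‖ ^ a * |f y|) :=
    setIntegral_mono_on hint hwK.integrableOn hD₂meas hpt
  have hstep2 : ∫ y in D₂, K * (‖y‖ ^ a * |f y|) ≤ ∫ y : Ed d, K * (‖y‖ ^ a * |f y|) :=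
    setIntegral_le_integral hwK (ae_of_all _ fun y => by positivity)
  have hstep3 : ∫ y : Ed d, K * (‖y‖ ^ a * |f y|) = K * ∫ y : Ed d, ‖y‖ ^ a * |f y| :=
    integral_const_mul K _
  have hfin : K * ∫ y : Ed d, ‖y‖ ^ a * |f y| =
      C' * ‖x‖ ^ (-(d:ℝ) - N + ε + δ) * ∫ y : Ed d, ‖y‖ ^ a * |f y| := by
    rw [hK]
  linarith

end
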